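/- Let H = H(a,b)_F be a division quaternion algebra over a field F of characteristic not 2, and suppose either F is quadratically closed, or F is Pythagorean and a = b = 1. Then for every α = a₀ + a₁i + a₂j + a₃k ∈ H there exist a nonzero x ∈ H and r ∈ F such that x⁻¹αx = a₀ + ri. -/

import Mathlib

open Quaternion

/-- diagonalization-type lemma: every quaternion of a division quaternion
algebra (over a quadratically closed field, or a Pythagorean field with `a = b = 1`)
is conjugate to one of the form `a₀ + r i`. -/
theorem stmt_10 (F : Type*) [Field F] (h2 : (2 : F) ≠ 0) (a b : F)
    (ha : a ≠ 0) (hb : b ≠ 0)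
    (hdiv : ∀ x : ℍ[F, -a, -b], x ≠ 0 → IsUnit x)
    (hcase : (∀ x : F, ∃ y : F, y ^ 2 = x) ∨
      ((∀ x y : F, ∃ z : F, x ^ 2 + y ^ 2 = z ^ 2) ∧ a = 1 ∧ b = 1))
    (α : ℍ[F, -a, -b]) :
    ∃ x : (ℍ[F, -a, -b])ˣ, ∃ r : F,
      (↑x⁻¹ : ℍ[F, -a, -b]) * α * ↑x = ⟨α.re, r, 0, 0⟩ := by
  obtain ⟨r, hr⟩ : ∃ r : F,
      a * r ^ 2 = a * α.imI ^ 2 + b * α.imJ ^ 2 + a * b * α.imK ^ 2 := by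
    rcases hcase with h | ⟨h, rfl, rfl⟩
    · obtain ⟨r, hr⟩ := h ((a * α.imI ^ 2 + b * α.imJ ^ 2 + a * b * α.imK ^ 2) / a)
      exact ⟨r, by rw [hr]; field_simp⟩
    · obtain ⟨z, hz⟩ := h α.imI α.imJ
      obtain ⟨r, hrz⟩ := h z α.imK
      exact ⟨r, by rw [← hrz, ← hz]; ring⟩
  by_cases hJK : α.imJ = 0 ∧ α.imK = 0
  · refine ⟨1, α.imI, ?_⟩
    obtain ⟨hJ, hK⟩ := hJK
    simp only [inv_one, Units.val_one, one_mul, mul_one]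
    ext <;> simp [hJ, hK]
  · set x : ℍ[F, -a, -b] := ⟨0, α.imI + r, α.imJ, α.imK⟩ with hx
    have hx0 : x ≠ 0 := by
      intro h
      apply hJK
      have hJ := congrArg QuaternionAlgebra.imJ h
      have hK := congrArg QuaternionAlgebra.imK h
      simp [hx] at hJ hK
      exact ⟨hJ, hK⟩
    obtain ⟨u, hu⟩ := hdiv x hx0
    refine ⟨u, r, ?_⟩
    have key : α * x = x * (⟨α.re, r, 0, 0⟩ : ℍ[F, -a, -b]) := by
      ext <;> simp only [hx, QuaternionAlgebra.re_mul, QuaternionAlgebra.imI_mul,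
        QuaternionAlgebra.imJ_mul, QuaternionAlgebra.imK_mul] <;> first
        | linear_combination hr
        | linear_combination -hr
        | ring
    calc (↑u⁻¹ : ℍ[F, -a, -b]) * α * ↑u
        = ↑u⁻¹ * (α * x) := by rw [hu, mul_assoc]
      _ = ↑u⁻¹ * (↑u * (⟨α.re, r, 0, 0⟩ : ℍ[F, -a, -b])) := by rw [key, hu]
      _ = _ := by rw [← mul_assoc, Units.inv_mul, one_mul]
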